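/- Under the hypotheses of the exponential-decay example (c₁ h(|l|)e^{−ϑ|l|} ≤ C_l ≤ c₂ h(|l|)e^{−ϑ|l|} for l ≠ 0, C₀ = 0, h a positive polynomial of degree p−1, ϑ > 0), there exists c₂₂ > 0 such that for all sufficiently large l: Ĉ_{l,2} = ∑_{k∈ℤ} C_k C_{l−k} ≤ c₂₂ · l^{2p+1} e^{−ϑ l}. Combined with the matching lower bound, for every m ≥ 2 and q ∈ {1,...,m−1} the ratio sup_{λ∈ℤ} Ĉ_{λ,m−q} Ĉ_{l−λ,q} / Ĉ_{l,m} is O(l^{−1}) and hence tends to 0 as l → ∞. -/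

import Mathlib

open Filter

/-- The `m`-fold (additive) convolution power on `ℤ`:
`Ĉ_{l,m} = ∑_{k₁+⋯+k_m = l} C_{k₁} ⋯ C_{k_m}`. -/
noncomputable def convPowZ (C : ℤ → ℝ) (m : ℕ) (l : ℤ) : ℝ :=
  ∑' σ : {f : Fin m → ℤ // ∑ i, f i = l}, ∏ i, C (σ.1 i)

private lemma sumNat (M : ℕ) {r : ℝ} (h0 : 0 ≤ r) (h1 : r < 1) :
    Summable (fun n : ℕ => (1 + 2*(n:ℝ))^M * r^n) := by
  have h1' : ‖r‖ < 1 := by rwa [Real.norm_eq_abs, abs_of_nonneg h0]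
  have hs : Summable (fun n : ℕ => (3:ℝ)^M * ((n:ℝ)^M * r^n) + (3:ℝ)^M * r^n) :=
    ((summable_pow_mul_geometric_of_norm_lt_one M h1').mul_left _).add
      ((summable_geometric_of_lt_one h0 h1).mul_left _)
  refine hs.of_nonneg_of_le (fun n => by positivity) (fun n => ?_)
  have hrn : (0:ℝ) ≤ r^n := by positivity
  have h3M : (1:ℝ) ≤ 3^M := one_le_pow₀ (by norm_num)
  have hb : (1 + 2*(n:ℝ))^M ≤ (3:ℝ)^M * (n:ℝ)^M + 3^M := by
    rcases Nat.eq_zero_or_pos n with hn | hn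
    · subst hn
      have : (0:ℝ) ≤ (3:ℝ)^M * (0:ℝ)^M := by positivity
      simp only [Nat.cast_zero, mul_zero, add_zero, one_pow]
      linarith
    · have h1n : (1:ℝ) ≤ (n:ℝ) := by exact_mod_cast hn
      have hle : (1 + 2*(n:ℝ)) ≤ 3 * n := by linarith
      have h3 : (0:ℝ) ≤ (3:ℝ)^M := by positivity
      calc (1 + 2*(n:ℝ))^M ≤ (3*(n:ℝ))^M := pow_le_pow_left₀ (by positivity) hle M
        _ = 3^M * (n:ℝ)^M := mul_pow 3 _ M
        _ ≤ 3^M * (n:ℝ)^M + 3^M := by linarith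
  calc (1 + 2*(n:ℝ))^M * r^n ≤ ((3:ℝ)^M * (n:ℝ)^M + 3^M) * r^n :=
        mul_le_mul_of_nonneg_right hb hrn
    _ = (3:ℝ)^M * ((n:ℝ)^M * r^n) + (3:ℝ)^M * r^n := by ring

noncomputable def expPoly (ϑ : ℝ) (N : ℕ) (x : ℝ) : ℝ := (1+2*x)^N * Real.exp (-(2*ϑ)*x)

noncomputable def TM (ϑ : ℝ) (N : ℕ) : ℝ := ∑' n : ℕ, expPoly ϑ N n

private lemma expPoly_nonneg {ϑ : ℝ} (N : ℕ) {x : ℝ} (hx : 0 ≤ x) : 0 ≤ expPoly ϑ N x := by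
  unfold expPoly; positivity

private lemma summable_expPoly {ϑ : ℝ} (N : ℕ) (hϑ : 0 < ϑ) :
    Summable (fun n : ℕ => expPoly ϑ N n) := by
  have h0 : (0:ℝ) ≤ Real.exp (-(2*ϑ)) := (Real.exp_pos _).le
  have h1 : Real.exp (-(2*ϑ)) < 1 := Real.exp_lt_one_iff.mpr (by linarith)
  exact (sumNat N h0 h1).congr fun n => by
    rw [expPoly, mul_comm (-(2*ϑ)) (n:ℝ), Real.exp_nat_mul]

private lemma summable_expPoly_succ {ϑ : ℝ} (N : ℕ) (hϑ : 0 < ϑ) :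
    Summable (fun n : ℕ => expPoly ϑ N ((n:ℝ) + 1)) := by
  have := (summable_expPoly N hϑ).comp_injective (add_right_injective 1)
  refine this.congr fun n => ?_
  simp only [Function.comp_apply]
  push_cast
  ring_nf

private lemma tsum_expPoly_succ_le {ϑ : ℝ} (N : ℕ) (hϑ : 0 < ϑ) :
    ∑' n : ℕ, expPoly ϑ N ((n:ℝ) + 1) ≤ TM ϑ N := by
  refine Summable.tsum_le_tsum_of_inj (fun n => n + 1) (add_left_injective 1)
    (fun c _ => expPoly_nonneg N (by positivity)) (fun n => by push_cast; ring_nf; exact le_rfl)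
    (summable_expPoly_succ N hϑ) (summable_expPoly N hϑ)

private lemma TM_nonneg {ϑ : ℝ} (N : ℕ) : 0 ≤ TM ϑ N :=
  tsum_nonneg fun n => expPoly_nonneg N (by positivity)

private lemma conv_upper_nonneg_l {ϑ : ℝ} (hϑ : 0 < ϑ) (a b : ℕ) {A B : ℝ} (hA : 0 ≤ A) (hB : 0 ≤ B)
    (f g : ℤ → ℝ) (hf0 : ∀ k, 0 ≤ f k) (hg0 : ∀ k, 0 ≤ g k)
    (hf : ∀ k : ℤ, f k ≤ A * (1+|(k:ℝ)|)^a * Real.exp (-ϑ * |(k:ℝ)|))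
    (hg : ∀ k : ℤ, g k ≤ B * (1+|(k:ℝ)|)^b * Real.exp (-ϑ * |(k:ℝ)|))
    (l : ℤ) (hl : 0 ≤ l) :
    Summable (fun k : ℤ => f k * g (l - k)) ∧
      ∑' k : ℤ, f k * g (l - k)
        ≤ A * B * (1 + 2 * TM ϑ (a+b)) * (1+(l:ℝ))^(a+b+1) * Real.exp (-ϑ * l) := by
  set N := a + b with hN
  have hlR : (0:ℝ) ≤ (l:ℝ) := by exact_mod_cast hl
  set t₁ : ℤ → ℝ := fun k => if k < 0 then expPoly ϑ N (-(k:ℝ)) else 0 with ht₁def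
  set t₂ : ℤ → ℝ := fun k => if 0 ≤ k ∧ k ≤ l then 1 else 0 with ht₂def
  set t₃ : ℤ → ℝ := fun k => if l < k then expPoly ϑ N ((k:ℝ) - l) else 0 with ht₃def
  set cl : ℝ := A * B * (1+(l:ℝ))^N * Real.exp (-ϑ * l) with hcldef
  have hcl0 : 0 ≤ cl := by positivity
  -- pointwise majorization
  have hmaj : ∀ k : ℤ, f k * g (l - k) ≤ cl * (t₁ k + t₂ k + t₃ k) := by
    intro k
    have hcast : |((l - k : ℤ) : ℝ)| = |(l:ℝ) - (k:ℝ)| := by push_cast; ring_nf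
    have step0 : f k * g (l - k)
        ≤ A * B * ((1+|(k:ℝ)|)^a * (1+|(l:ℝ)-(k:ℝ)|)^b
            * Real.exp (-ϑ * (|(k:ℝ)| + |(l:ℝ)-(k:ℝ)|))) := by
      have h1 := hf k
      have h2 := hg (l - k)
      rw [hcast] at h2
      have := mul_le_mul h1 h2 (hg0 _) (by positivity)
      calc f k * g (l-k) ≤ (A * (1+|(k:ℝ)|)^a * Real.exp (-ϑ * |(k:ℝ)|)) *
            (B * (1+|(l:ℝ)-(k:ℝ)|)^b * Real.exp (-ϑ * |(l:ℝ)-(k:ℝ)|)) := this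
        _ = A * B * ((1+|(k:ℝ)|)^a * (1+|(l:ℝ)-(k:ℝ)|)^b
            * (Real.exp (-ϑ * |(k:ℝ)|) * Real.exp (-ϑ * |(l:ℝ)-(k:ℝ)|))) := by ring
        _ = _ := by rw [← Real.exp_add]; ring_nf
    -- the excess distance
    set D : ℤ := if k < 0 then -k else if k ≤ l then 0 else k - l with hDdef
    have hD0 : 0 ≤ D := by rw [hDdef]; split_ifs <;> omega
    have hD0R : (0:ℝ) ≤ (D:ℝ) := by exact_mod_cast hD0
    have habs : |(k:ℝ)| + |(l:ℝ)-(k:ℝ)| = (l:ℝ) + 2*(D:ℝ) := by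
      rw [hDdef]
      split_ifs with h1 h2
      · have hk : (k:ℝ) < 0 := by exact_mod_cast h1
        rw [abs_of_neg hk, abs_of_nonneg (by linarith)]
        push_cast; ring
      · have hk : (0:ℝ) ≤ (k:ℝ) := by exact_mod_cast not_lt.mp h1
        have hkl : (k:ℝ) ≤ (l:ℝ) := by exact_mod_cast h2
        rw [abs_of_nonneg hk, abs_of_nonneg (by linarith)]
        push_cast; ring
      · have hkl : (l:ℝ) < (k:ℝ) := by exact_mod_cast not_le.mp h2
        rw [abs_of_nonneg (by linarith), abs_of_nonpos (by linarith)]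
        push_cast; ring
    have hsplit : expPoly ϑ N (D:ℝ) = t₁ k + t₂ k + t₃ k := by
      rw [ht₁def, ht₂def, ht₃def, hDdef]
      rcases lt_or_ge k 0 with h1 | h1
      · rw [if_pos h1]
        simp only [if_pos h1, if_neg (by omega : ¬(0 ≤ k ∧ k ≤ l)), if_neg (by omega : ¬ l < k)]
        push_cast; ring_nf
      · rcases le_or_gt k l with h2 | h2
        · rw [if_neg (by omega), if_pos h2]
          simp only [if_neg (by omega : ¬ k < 0), if_pos (⟨h1, h2⟩ : 0 ≤ k ∧ k ≤ l),
            if_neg (by omega : ¬ l < k)]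
          simp [expPoly]
        · rw [if_neg (by omega), if_neg (by omega)]
          simp only [if_neg (by omega : ¬ k < 0), if_neg (by omega : ¬(0 ≤ k ∧ k ≤ l)),
            if_pos h2]
          push_cast; ring_nf
    -- bound the bracket by (1+l)^N e^{-θl} expPoly D
    have hu0 : (0:ℝ) ≤ |(k:ℝ)| + |(l:ℝ)-(k:ℝ)| := by positivity
    have hbr : (1+|(k:ℝ)|)^a * (1+|(l:ℝ)-(k:ℝ)|)^b
          * Real.exp (-ϑ * (|(k:ℝ)| + |(l:ℝ)-(k:ℝ)|))
        ≤ (1+(l:ℝ))^N * Real.exp (-ϑ * l) * expPoly ϑ N (D:ℝ) := by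
      have e1 : (1+|(k:ℝ)|)^a ≤ (1 + (|(k:ℝ)| + |(l:ℝ)-(k:ℝ)|))^a :=
        pow_le_pow_left₀ (by positivity) (by linarith [abs_nonneg ((l:ℝ)-(k:ℝ))]) a
      have e2 : (1+|(l:ℝ)-(k:ℝ)|)^b ≤ (1 + (|(k:ℝ)| + |(l:ℝ)-(k:ℝ)|))^b :=
        pow_le_pow_left₀ (by positivity) (by linarith [abs_nonneg ((k:ℝ))]) b
      have e3 : (1 + (|(k:ℝ)| + |(l:ℝ)-(k:ℝ)|))^N ≤ ((1+(l:ℝ)) * (1+2*(D:ℝ)))^N := by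
        apply pow_le_pow_left₀ (by positivity)
        rw [habs]; nlinarith
      have e4 : Real.exp (-ϑ * (|(k:ℝ)| + |(l:ℝ)-(k:ℝ)|))
          = Real.exp (-ϑ * l) * Real.exp (-(2*ϑ)*(D:ℝ)) := by
        rw [← Real.exp_add, habs]; ring_nf
      calc (1+|(k:ℝ)|)^a * (1+|(l:ℝ)-(k:ℝ)|)^b
            * Real.exp (-ϑ * (|(k:ℝ)| + |(l:ℝ)-(k:ℝ)|))
          ≤ (1 + (|(k:ℝ)| + |(l:ℝ)-(k:ℝ)|))^a * (1 + (|(k:ℝ)| + |(l:ℝ)-(k:ℝ)|))^b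
            * Real.exp (-ϑ * (|(k:ℝ)| + |(l:ℝ)-(k:ℝ)|)) := by
            apply mul_le_mul_of_nonneg_right _ (Real.exp_pos _).le
            exact mul_le_mul e1 e2 (by positivity) (by positivity)
        _ = (1 + (|(k:ℝ)| + |(l:ℝ)-(k:ℝ)|))^N
            * Real.exp (-ϑ * (|(k:ℝ)| + |(l:ℝ)-(k:ℝ)|)) := by rw [hN, pow_add]
        _ ≤ ((1+(l:ℝ)) * (1+2*(D:ℝ)))^N
            * Real.exp (-ϑ * (|(k:ℝ)| + |(l:ℝ)-(k:ℝ)|)) := by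
            apply mul_le_mul_of_nonneg_right e3 (Real.exp_pos _).le
        _ = (1+(l:ℝ))^N * Real.exp (-ϑ * l) * expPoly ϑ N (D:ℝ) := by
            rw [e4, expPoly, mul_pow]; ring
    calc f k * g (l - k)
        ≤ A * B * ((1+|(k:ℝ)|)^a * (1+|(l:ℝ)-(k:ℝ)|)^b
            * Real.exp (-ϑ * (|(k:ℝ)| + |(l:ℝ)-(k:ℝ)|))) := step0
      _ ≤ A * B * ((1+(l:ℝ))^N * Real.exp (-ϑ * l) * expPoly ϑ N (D:ℝ)) := by
          apply mul_le_mul_of_nonneg_left hbr (by positivity)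
      _ = cl * (t₁ k + t₂ k + t₃ k) := by rw [hsplit, hcldef]; ring
  -- summability and tsum bounds of the three pieces
  have hg₁ : Function.Injective (fun n : ℕ => -((n:ℤ) + 1)) := by
    intro x y hxy; simpa using hxy
  have hg₁supp : ∀ k : ℤ, k ∉ Set.range (fun n : ℕ => -((n:ℤ) + 1)) → t₁ k = 0 := by
    intro k hk
    rw [ht₁def]
    simp only []
    rw [if_neg]
    intro hk0
    refine hk ⟨(-k-1).toNat, ?_⟩
    show -(((-k-1).toNat : ℤ) + 1) = k
    omega
  have hg₁comp : ∀ n : ℕ, t₁ (-((n:ℤ) + 1)) = expPoly ϑ N ((n:ℝ)+1) := by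
    intro n
    rw [ht₁def]
    simp only []
    rw [if_pos (by omega)]
    norm_num
  have ht₁sum : Summable t₁ := by
    rw [← hg₁.summable_iff (fun k hk => hg₁supp k hk)]
    exact (summable_expPoly_succ N hϑ).congr fun n => (hg₁comp n).symm
  have ht₁tsum : ∑' k : ℤ, t₁ k ≤ TM ϑ N := by
    rw [← hg₁.tsum_eq (f := t₁) (fun k hk => by
      by_contra hr; exact hk (hg₁supp k hr))]
    rw [tsum_congr hg₁comp]
    exact tsum_expPoly_succ_le N hϑ
  have hg₃ : Function.Injective (fun n : ℕ => l + (n:ℤ) + 1) := by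
    intro x y hxy; simpa using hxy
  have hg₃supp : ∀ k : ℤ, k ∉ Set.range (fun n : ℕ => l + (n:ℤ) + 1) → t₃ k = 0 := by
    intro k hk
    rw [ht₃def]; simp only []
    rw [if_neg]
    intro hk0
    refine hk ⟨(k - l - 1).toNat, ?_⟩
    show l + ((k - l - 1).toNat : ℤ) + 1 = k
    omega
  have hg₃comp : ∀ n : ℕ, t₃ (l + (n:ℤ) + 1) = expPoly ϑ N ((n:ℝ)+1) := by
    intro n
    rw [ht₃def]; simp only []
    rw [if_pos (by omega)]
    push_cast; ring_nf
  have ht₃sum : Summable t₃ := by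
    rw [← hg₃.summable_iff (fun k hk => hg₃supp k hk)]
    exact (summable_expPoly_succ N hϑ).congr fun n => (hg₃comp n).symm
  have ht₃tsum : ∑' k : ℤ, t₃ k ≤ TM ϑ N := by
    rw [← hg₃.tsum_eq (f := t₃) (fun k hk => by
      by_contra hr; exact hk (hg₃supp k hr))]
    rw [tsum_congr hg₃comp]
    exact tsum_expPoly_succ_le N hϑ
  have ht₂supp : ∀ k : ℤ, k ∉ Finset.Icc 0 l → t₂ k = 0 := by
    intro k hk
    rw [ht₂def]; simp only []
    rw [if_neg]
    simp only [Finset.mem_Icc] at hk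
    exact hk
  have ht₂sum : Summable t₂ := summable_of_ne_finset_zero ht₂supp
  have ht₂tsum : ∑' k : ℤ, t₂ k = 1 + (l:ℝ) := by
    rw [tsum_eq_sum ht₂supp]
    have : ∀ k ∈ Finset.Icc 0 l, t₂ k = 1 := by
      intro k hk
      simp only [Finset.mem_Icc] at hk
      rw [ht₂def]; simp only []
      rw [if_pos hk]
    rw [Finset.sum_congr rfl this, Finset.sum_const, Int.card_Icc]
    have h2 : (l + 1 - 0).toNat = l.toNat + 1 := by omega
    rw [h2, nsmul_eq_mul]
    have h3 : (l.toNat : ℝ) = (l : ℝ) := by exact_mod_cast Int.toNat_of_nonneg hl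
    push_cast
    rw [h3]
    ring
  -- assemble
  have htsum : Summable (fun k : ℤ => t₁ k + t₂ k + t₃ k) := (ht₁sum.add ht₂sum).add ht₃sum
  have hmajsum : Summable (fun k : ℤ => cl * (t₁ k + t₂ k + t₃ k)) := htsum.mul_left cl
  have hfg0 : ∀ k : ℤ, 0 ≤ f k * g (l - k) := fun k => mul_nonneg (hf0 k) (hg0 _)
  have hsumfg : Summable (fun k : ℤ => f k * g (l - k)) :=
    hmajsum.of_nonneg_of_le hfg0 hmaj
  refine ⟨hsumfg, ?_⟩
  have step1 : ∑' k : ℤ, f k * g (l - k) ≤ ∑' k : ℤ, cl * (t₁ k + t₂ k + t₃ k) :=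
    Summable.tsum_le_tsum hmaj hsumfg hmajsum
  have step2 : ∑' k : ℤ, cl * (t₁ k + t₂ k + t₃ k)
      = cl * (∑' k, t₁ k + ∑' k, t₂ k + ∑' k, t₃ k) := by
    rw [tsum_mul_left, Summable.tsum_add (ht₁sum.add ht₂sum) ht₃sum, Summable.tsum_add ht₁sum ht₂sum]
  have step3 : ∑' k, t₁ k + ∑' k, t₂ k + ∑' k, t₃ k ≤ (1+(l:ℝ)) * (1 + 2 * TM ϑ N) := by
    have h1l : (1:ℝ) ≤ 1 + (l:ℝ) := by linarith
    have := TM_nonneg (ϑ := ϑ) (N := N)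
    nlinarith [ht₁tsum, ht₃tsum, ht₂tsum.le]
  calc ∑' k : ℤ, f k * g (l - k) ≤ cl * (∑' k, t₁ k + ∑' k, t₂ k + ∑' k, t₃ k) := by
        rw [← step2]; exact step1
    _ ≤ cl * ((1+(l:ℝ)) * (1 + 2 * TM ϑ N)) := by
        apply mul_le_mul_of_nonneg_left step3 hcl0
    _ = A * B * (1 + 2 * TM ϑ N) * (1+(l:ℝ))^(N+1) * Real.exp (-ϑ * l) := by
        rw [hcldef, pow_succ]; ring

private lemma conv_upper_abs {ϑ : ℝ} (hϑ : 0 < ϑ) (a b : ℕ) {A B : ℝ} (hA : 0 ≤ A) (hB : 0 ≤ B)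
    (f g : ℤ → ℝ) (hf0 : ∀ k, 0 ≤ f k) (hg0 : ∀ k, 0 ≤ g k)
    (hf : ∀ k : ℤ, f k ≤ A * (1+|(k:ℝ)|)^a * Real.exp (-ϑ * |(k:ℝ)|))
    (hg : ∀ k : ℤ, g k ≤ B * (1+|(k:ℝ)|)^b * Real.exp (-ϑ * |(k:ℝ)|))
    (l : ℤ) :
    Summable (fun k : ℤ => f k * g (l - k)) ∧
      ∑' k : ℤ, f k * g (l - k)
        ≤ A * B * (1 + 2 * TM ϑ (a+b)) * (1+|(l:ℝ)|)^(a+b+1) * Real.exp (-ϑ * |(l:ℝ)|) := by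
  rcases le_or_gt 0 l with hl | hl
  · have habs : |(l:ℝ)| = (l:ℝ) := abs_of_nonneg (by exact_mod_cast hl)
    rw [habs]
    exact conv_upper_nonneg_l hϑ a b hA hB f g hf0 hg0 hf hg l hl
  · set f' : ℤ → ℝ := fun k => f (-k) with hf'def
    set g' : ℤ → ℝ := fun k => g (-k) with hg'def
    have hcast : ∀ k : ℤ, |((-k : ℤ):ℝ)| = |(k:ℝ)| := by
      intro k; push_cast; rw [abs_neg]
    have hf' : ∀ k : ℤ, f' k ≤ A * (1+|(k:ℝ)|)^a * Real.exp (-ϑ * |(k:ℝ)|) := by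
      intro k; rw [hf'def]
      simpa [hcast k] using hf (-k)
    have hg' : ∀ k : ℤ, g' k ≤ B * (1+|(k:ℝ)|)^b * Real.exp (-ϑ * |(k:ℝ)|) := by
      intro k; rw [hg'def]
      simpa [hcast k] using hg (-k)
    obtain ⟨hs, hb⟩ := conv_upper_nonneg_l hϑ a b hA hB f' g' (fun k => hf0 _) (fun k => hg0 _)
      hf' hg' (-l) (by omega)
    have hfun : (fun k : ℤ => f' k * g' (-l - k)) = (fun k : ℤ => f k * g (l - k)) ∘ (Neg.neg) := by
      funext k
      simp only [hf'def, hg'def, Function.comp_apply]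
      congr 1
      congr 1
      ring
    have hsum2 : Summable (fun k : ℤ => f k * g (l - k)) := by
      apply ((Equiv.neg ℤ).summable_iff).mp
      have hcoe : ⇑(Equiv.neg ℤ) = (Neg.neg : ℤ → ℤ) := rfl
      rw [hcoe, ← hfun]
      exact hs
    refine ⟨hsum2, ?_⟩
    have htsum : ∑' k : ℤ, f' k * g' (-l - k) = ∑' k : ℤ, f k * g (l - k) := by
      rw [hfun]
      have hcoe : ⇑(Equiv.neg ℤ) = (Neg.neg : ℤ → ℤ) := rfl
      rw [← hcoe]
      exact (Equiv.neg ℤ).tsum_eq (fun k : ℤ => f k * g (l - k))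
    have habs : |(l:ℝ)| = ((-l : ℤ):ℝ) := by
      push_cast
      rw [abs_of_neg (by exact_mod_cast hl)]
    rw [habs, ← htsum]
    exact hb

private lemma conv_lower {ϑ : ℝ} (hϑ : 0 < ϑ) (a b : ℕ) {α β : ℝ} (hα : 0 < α) (hβ : 0 < β)
    (K : ℤ) (hK : 1 ≤ K) (f g : ℤ → ℝ) (hf0 : ∀ k, 0 ≤ f k) (hg0 : ∀ k, 0 ≤ g k)
    (hf : ∀ k : ℤ, K ≤ k → α * (k:ℝ)^a * Real.exp (-ϑ * k) ≤ f k)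
    (hg : ∀ k : ℤ, K ≤ k → β * (k:ℝ)^b * Real.exp (-ϑ * k) ≤ g k)
    (l : ℤ) (hl : 8*K + 8 ≤ l) (hs : Summable (fun k : ℤ => f k * g (l - k))) :
    α * β * ((4:ℝ)⁻¹)^(a+b+1) * (l:ℝ)^(a+b+1) * Real.exp (-ϑ * l)
      ≤ ∑' k : ℤ, f k * g (l - k) := by
  set d : ℤ := l / 3 with hd
  have hlarge : 16 ≤ l := by omega
  have hdK : K ≤ d := by omega
  have hdlK : ∀ k ∈ Finset.Icc d (2*d), K ≤ k ∧ K ≤ l - k ∧ 4*k ≥ l ∧ 4*(l-k) ≥ l := by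
    intro k hk
    simp only [Finset.mem_Icc] at hk
    omega
  have hl0R : (0:ℝ) < (l:ℝ) := by exact_mod_cast (by omega : (0:ℤ) < l)
  set c : ℝ := α * β * ((l:ℝ)/4)^a * ((l:ℝ)/4)^b * Real.exp (-ϑ * l) with hc
  have hterm : ∀ k ∈ Finset.Icc d (2*d), c ≤ f k * g (l - k) := by
    intro k hk
    obtain ⟨h1, h2, h3, h4⟩ := hdlK k hk
    have hk0 : (0:ℝ) < (k:ℝ) := by exact_mod_cast (by omega : (0:ℤ) < k)
    have hlk0 : (0:ℝ) < ((l-k:ℤ):ℝ) := by exact_mod_cast (by omega : (0:ℤ) < l - k)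
    have hfk := hf k h1
    have hgk := hg (l-k) h2
    have e1 : ((l:ℝ)/4) ≤ (k:ℝ) := by
      have : (l:ℝ) ≤ 4*(k:ℝ) := by exact_mod_cast h3
      linarith
    have e2 : ((l:ℝ)/4) ≤ ((l-k:ℤ):ℝ) := by
      have : (l:ℝ) ≤ 4*((l-k:ℤ):ℝ) := by exact_mod_cast h4
      linarith
    have p1 : ((l:ℝ)/4)^a ≤ (k:ℝ)^a := pow_le_pow_left₀ (by linarith) e1 a
    have p2 : ((l:ℝ)/4)^b ≤ ((l-k:ℤ):ℝ)^b := pow_le_pow_left₀ (by linarith) e2 b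
    have hexp : Real.exp (-ϑ * k) * Real.exp (-ϑ * ((l-k:ℤ):ℝ)) = Real.exp (-ϑ * l) := by
      rw [← Real.exp_add]
      congr 1
      push_cast
      ring
    calc c = (α * ((l:ℝ)/4)^a * Real.exp (-ϑ * k)) * (β * ((l:ℝ)/4)^b
            * Real.exp (-ϑ * ((l-k:ℤ):ℝ))) := by rw [hc, ← hexp]; ring
      _ ≤ (α * (k:ℝ)^a * Real.exp (-ϑ * k)) * (β * ((l-k:ℤ):ℝ)^b
            * Real.exp (-ϑ * ((l-k:ℤ):ℝ))) := by
          apply mul_le_mul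
          · exact mul_le_mul_of_nonneg_right (mul_le_mul_of_nonneg_left p1 hα.le)
              (Real.exp_pos _).le
          · exact mul_le_mul_of_nonneg_right (mul_le_mul_of_nonneg_left p2 hβ.le)
              (Real.exp_pos _).le
          · positivity
          · positivity
      _ ≤ f k * g (l - k) := by
          apply mul_le_mul hfk hgk (by positivity) (hf0 k)
  have hsum_ge : ∀ x ∈ Finset.Icc d (2*d), (0:ℝ) ≤ f x * g (l - x) :=
    fun x _ => mul_nonneg (hf0 x) (hg0 _)
  have hcard : (Finset.Icc d (2*d)).card = (d+1).toNat := by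
    rw [Int.card_Icc]
    congr 1
    omega
  have hclower : (Finset.Icc d (2*d)).card • c ≤ ∑ k ∈ Finset.Icc d (2*d), f k * g (l - k) :=
    Finset.card_nsmul_le_sum _ _ _ hterm
  have htsum_ge : ∑ k ∈ Finset.Icc d (2*d), f k * g (l - k) ≤ ∑' k : ℤ, f k * g (l - k) :=
    Summable.sum_le_tsum _ (fun k _ => mul_nonneg (hf0 k) (hg0 _)) hs
  have hcardR : ((l:ℝ)/4) ≤ ((Finset.Icc d (2*d)).card : ℝ) := by
    rw [hcard]
    have h1 : l ≤ 4 * ((d+1).toNat : ℤ) := by omega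
    have : (l:ℝ) ≤ 4 * (((d+1).toNat : ℤ):ℝ) := by exact_mod_cast h1
    push_cast at this ⊢
    linarith
  have hc0 : 0 ≤ c := by rw [hc]; positivity
  calc α * β * ((4:ℝ)⁻¹)^(a+b+1) * (l:ℝ)^(a+b+1) * Real.exp (-ϑ * l)
      = ((l:ℝ)/4) * c := by
        rw [hc]
        field_simp
        ring
    _ ≤ ((Finset.Icc d (2*d)).card : ℝ) * c := mul_le_mul_of_nonneg_right hcardR hc0
    _ = (Finset.Icc d (2*d)).card • c := by rw [nsmul_eq_mul]
    _ ≤ ∑ k ∈ Finset.Icc d (2*d), f k * g (l - k) := hclower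
    _ ≤ ∑' k : ℤ, f k * g (l - k) := htsum_ge


private lemma convPowZ_nonneg (C : ℤ → ℝ) (hC : ∀ l, 0 ≤ C l) (m : ℕ) (l : ℤ) :
    0 ≤ convPowZ C m l :=
  tsum_nonneg fun σ => Finset.prod_nonneg fun i _ => hC _

private def oneEquiv (l : ℤ) : Unique {f : Fin 1 → ℤ // ∑ i, f i = l} where
  default := ⟨fun _ => l, by simp⟩
  uniq := by
    rintro ⟨f, hf⟩
    have : f 0 = l := by simpa [Fin.sum_univ_one] using hf
    apply Subtype.ext
    funext i
    have : i = 0 := Subsingleton.elim _ _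
    simp [this, ‹f 0 = l›]

private lemma convPowZ_one (C : ℤ → ℝ) (l : ℤ) : convPowZ C 1 l = C l := by
  have huniq : ∀ b : {f : Fin 1 → ℤ // ∑ i, f i = l}, b = ⟨fun _ => l, by simp⟩ := by
    rintro ⟨f, hf⟩
    apply Subtype.ext
    funext i
    have h0 : f 0 = l := by simpa using hf
    have : i = 0 := Subsingleton.elim _ _
    simp [this, h0]
  rw [convPowZ, tsum_eq_single (⟨fun _ => l, by simp⟩ : {f : Fin 1 → ℤ // ∑ i, f i = l})
    (fun b hb => absurd (huniq b) hb)]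
  simp

private lemma summable_one (C : ℤ → ℝ) (l : ℤ) :
    Summable (fun σ : {f : Fin 1 → ℤ // ∑ i, f i = l} => ∏ i, C (σ.1 i)) := by
  haveI := oneEquiv l
  exact summable_of_finite_support (Set.toFinite _)

private def succEquiv (r : ℕ) (l : ℤ) :
    (Σ k : ℤ, {g : Fin r → ℤ // ∑ i, g i = k}) ≃ {f : Fin (r+1) → ℤ // ∑ i, f i = l} where
  toFun := fun x => ⟨Fin.snoc x.2.1 (l - x.1), by
    rw [Fin.sum_univ_castSucc]
    simp [Fin.snoc_castSucc, Fin.snoc_last, x.2.2]⟩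
  invFun := fun ⟨f, hf⟩ => ⟨∑ i : Fin r, f i.castSucc, ⟨fun i => f i.castSucc, rfl⟩⟩
  left_inv := by
    rintro ⟨k, g, hg⟩
    refine Sigma.ext ?_ ?_
    · simp [Fin.snoc_castSucc, hg]
    · apply Subtype.heq_iff_coe_eq ?_ |>.mpr
      · funext i
        simp [Fin.snoc_castSucc]
      · intro x
        simp [Fin.snoc_castSucc, hg]
  right_inv := by
    rintro ⟨f, hf⟩
    apply Subtype.ext
    funext i
    refine Fin.lastCases ?_ ?_ i
    · simp only [Fin.snoc_last]
      rw [Fin.sum_univ_castSucc] at hf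
      omega
    · intro j
      simp [Fin.snoc_castSucc]

private lemma convPow_succ (C : ℤ → ℝ) (hC : ∀ k, 0 ≤ C k) (r : ℕ) (l : ℤ)
    (hfib : ∀ k : ℤ, Summable (fun σ : {f : Fin r → ℤ // ∑ i, f i = k} => ∏ i, C (σ.1 i)))
    (hout : Summable (fun k : ℤ => convPowZ C r k * C (l - k))) :
    Summable (fun σ : {f : Fin (r+1) → ℤ // ∑ i, f i = l} => ∏ i, C (σ.1 i)) ∧
      convPowZ C (r+1) l = ∑' k : ℤ, convPowZ C r k * C (l - k) := by
  set F : (Σ k : ℤ, {g : Fin r → ℤ // ∑ i, g i = k}) → ℝ :=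
    fun x => (∏ i, C (x.2.1 i)) * C (l - x.1) with hF
  have hFcomp : ∀ x : (Σ k : ℤ, {g : Fin r → ℤ // ∑ i, g i = k}),
      (∏ i, C (((succEquiv r l) x).1 i)) = F x := by
    intro x
    have hcoe : ((succEquiv r l) x).1 = Fin.snoc x.2.1 (l - x.1) := rfl
    rw [hF, hcoe, Fin.prod_univ_castSucc]
    simp [Fin.snoc_castSucc, Fin.snoc_last]
  have hF0 : ∀ x, 0 ≤ F x := fun x => mul_nonneg (Finset.prod_nonneg fun i _ => hC _) (hC _)
  have hFfib : ∀ k : ℤ, Summable (fun g : {g : Fin r → ℤ // ∑ i, g i = k} => F ⟨k, g⟩) := by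
    intro k
    exact (hfib k).mul_right (C (l - k))
  have hFsums : ∀ k : ℤ, ∑' g : {g : Fin r → ℤ // ∑ i, g i = k}, F ⟨k, g⟩
      = convPowZ C r k * C (l - k) := by
    intro k
    rw [hF]
    simp only []
    rw [tsum_mul_right]
    rfl
  have hFsum : Summable F := by
    rw [summable_sigma_of_nonneg hF0]
    refine ⟨hFfib, ?_⟩
    refine hout.congr fun k => ?_
    rw [hFsums k]
  have hsub : Summable (fun σ : {f : Fin (r+1) → ℤ // ∑ i, f i = l} => ∏ i, C (σ.1 i)) := by
    apply ((succEquiv r l).summable_iff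
      (f := fun σ : {f : Fin (r+1) → ℤ // ∑ i, f i = l} => ∏ i, C (σ.1 i))).mp
    exact hFsum.congr fun x => (hFcomp x).symm
  refine ⟨hsub, ?_⟩
  rw [convPowZ, ← (succEquiv r l).tsum_eq (fun σ : {f : Fin (r+1) → ℤ // ∑ i, f i = l}
    => ∏ i, C (σ.1 i))]
  rw [tsum_congr hFcomp, Summable.tsum_sigma hFsum]
  exact tsum_congr hFsums

private lemma key_all (C : ℤ → ℝ) (hC : ∀ l, 0 ≤ C l) {ϑ A α : ℝ} {K : ℤ}
    (hϑ : 0 < ϑ) (hA : 0 < A) (hα : 0 < α) (hK : 1 ≤ K) (p : ℕ)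
    (hCb : ∀ k : ℤ, C k ≤ A * (1+|(k:ℝ)|)^p * Real.exp (-ϑ * |(k:ℝ)|))
    (hCl : ∀ k : ℤ, K ≤ k → α * (k:ℝ)^p * Real.exp (-ϑ * (k:ℝ)) ≤ C k) :
    ∀ r : ℕ, 1 ≤ r →
      ∃ B β' : ℝ, ∃ L : ℤ, 0 < B ∧ 0 < β' ∧ 1 ≤ L ∧
        (∀ l : ℤ, Summable (fun σ : {f : Fin r → ℤ // ∑ i, f i = l} => ∏ i, C (σ.1 i))) ∧
        (∀ l : ℤ, convPowZ C r l ≤ B * (1+|(l:ℝ)|)^(r*p + r - 1) * Real.exp (-ϑ * |(l:ℝ)|)) ∧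
        (∀ l : ℤ, L ≤ l → β' * (l:ℝ)^(r*p + r - 1) * Real.exp (-ϑ * (l:ℝ)) ≤ convPowZ C r l) := by
  intro r hr
  induction r, hr using Nat.le_induction with
  | base =>
    refine ⟨A, α, K, hA, hα, hK, fun l => summable_one C l, ?_, ?_⟩
    · intro l
      have he : 1*p + 1 - 1 = p := by omega
      rw [he, convPowZ_one]
      exact hCb l
    · intro l hl
      have he : 1*p + 1 - 1 = p := by omega
      rw [he, convPowZ_one]
      exact hCl l hl
  | succ r hr ih =>
    obtain ⟨B, β, L, hB, hβ, hL, hfib, hub, hlb⟩ := ih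
    set e : ℕ := r*p + r - 1 with hedef
    have hexp : e + p + 1 = (r+1)*p + (r+1) - 1 := by
      rw [hedef]
      have h2 : (r+1)*p = r*p + p := by ring
      rw [h2]
      generalize r*p = x
      omega
    have hconv := fun l => conv_upper_abs hϑ e p hB.le hA.le (convPowZ C r) C
      (fun k => convPowZ_nonneg C hC r k) hC hub hCb l
    have hident := fun l => convPow_succ C hC r l hfib (hconv l).1
    have hTMpos : 0 < 1 + 2 * TM ϑ (e + p) := by
      have := TM_nonneg (ϑ := ϑ) (N := e + p)
      linarith
    set K' : ℤ := max K L with hK'def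
    have hK'1 : 1 ≤ K' := le_trans hK (le_max_left _ _)
    refine ⟨B * A * (1 + 2 * TM ϑ (e + p)), β * α * ((4:ℝ)⁻¹)^(e+p+1), 8*K' + 8,
      by positivity, by positivity, by omega, fun l => (hident l).1, ?_, ?_⟩
    · intro l
      rw [(hident l).2, ← hexp]
      exact (hconv l).2
    · intro l hl
      rw [(hident l).2, ← hexp]
      exact conv_lower hϑ e p hβ hα K' hK'1 (convPowZ C r) C
        (fun k => convPowZ_nonneg C hC r k) hC
        (fun k hk => hlb k (le_trans (le_max_right _ _) hk))
        (fun k hk => hCl k (le_trans (le_max_left _ _) hk)) l hl (hconv l).1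

private lemma poly_exp_max {ϑ : ℝ} (hϑ : 0 < ϑ) (s t : ℕ) (l lam : ℤ) (hl : 0 ≤ l)
    (hn : ((s+t : ℕ) : ℝ) ≤ ϑ * (1 + l)) :
    (1+|(lam:ℝ)|)^s * (1+|((l-lam : ℤ):ℝ)|)^t
      * (Real.exp (-ϑ * |(lam:ℝ)|) * Real.exp (-ϑ * |((l-lam : ℤ):ℝ)|))
      ≤ (1+(l:ℝ))^(s+t) * Real.exp (-ϑ * l) := by
  have hlR : (0:ℝ) ≤ (l:ℝ) := by exact_mod_cast hl
  set u : ℝ := |(lam:ℝ)| + |((l-lam : ℤ):ℝ)| with hu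
  have hu0 : 0 ≤ u := by positivity
  have hul : (l:ℝ) ≤ u := by
    have h1 : |(l:ℝ)| ≤ |(lam:ℝ)| + |((l-lam : ℤ):ℝ)| := by
      have : (l:ℝ) = (lam:ℝ) + ((l-lam : ℤ):ℝ) := by push_cast; ring
      rw [this]
      exact abs_add_le _ _
    calc (l:ℝ) ≤ |(l:ℝ)| := le_abs_self _
      _ ≤ u := h1
  have e1 : (1+|(lam:ℝ)|)^s ≤ (1+u)^s :=
    pow_le_pow_left₀ (by positivity) (by rw [hu]; linarith [abs_nonneg ((l-lam : ℤ):ℝ)]) s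
  have e2 : (1+|((l-lam : ℤ):ℝ)|)^t ≤ (1+u)^t :=
    pow_le_pow_left₀ (by positivity) (by rw [hu]; linarith [abs_nonneg ((lam:ℝ))]) t
  have eexp : Real.exp (-ϑ * |(lam:ℝ)|) * Real.exp (-ϑ * |((l-lam : ℤ):ℝ)|)
      = Real.exp (-ϑ * u) := by
    rw [← Real.exp_add, hu]; ring_nf
  have step1 : (1+|(lam:ℝ)|)^s * (1+|((l-lam : ℤ):ℝ)|)^t
      * (Real.exp (-ϑ * |(lam:ℝ)|) * Real.exp (-ϑ * |((l-lam : ℤ):ℝ)|))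
      ≤ (1+u)^(s+t) * Real.exp (-ϑ * u) := by
    rw [eexp, pow_add]
    apply mul_le_mul_of_nonneg_right _ (Real.exp_pos _).le
    exact mul_le_mul e1 e2 (by positivity) (by positivity)
  refine le_trans step1 ?_
  -- now show (1+u)^(s+t) e^{-ϑu} ≤ (1+l)^(s+t) e^{-ϑl}
  set N : ℕ := s + t with hN
  have h1l : (0:ℝ) < 1 + l := by linarith
  have key : (1+u) ≤ (1+(l:ℝ)) * Real.exp ((u - l)/(1+l)) := by
    have h2 := Real.add_one_le_exp ((u - (l:ℝ))/(1+(l:ℝ)))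
    have h3 : (1+(l:ℝ)) * ((u - l)/(1+l) + 1) ≤ (1+(l:ℝ)) * Real.exp ((u - l)/(1+l)) :=
      mul_le_mul_of_nonneg_left h2 h1l.le
    calc (1+u) = (1+(l:ℝ)) * ((u - l)/(1+l) + 1) := by field_simp; ring
      _ ≤ _ := h3
  have keyN : (1+u)^N ≤ (1+(l:ℝ))^N * Real.exp ((N:ℝ) * ((u - l)/(1+l))) := by
    calc (1+u)^N ≤ ((1+(l:ℝ)) * Real.exp ((u - l)/(1+l)))^N :=
          pow_le_pow_left₀ (by linarith) key N
      _ = (1+(l:ℝ))^N * (Real.exp ((u - l)/(1+l)))^N := mul_pow _ _ N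
      _ = (1+(l:ℝ))^N * Real.exp ((N:ℝ) * ((u - l)/(1+l))) := by
          rw [← Real.exp_nat_mul]
  have hexple : Real.exp ((N:ℝ) * ((u - l)/(1+l))) * Real.exp (-ϑ * u)
      ≤ Real.exp (-ϑ * l) := by
    rw [← Real.exp_add, Real.exp_le_exp]
    have hdiv : (N:ℝ) * ((u - l)/(1+l)) ≤ ϑ * (u - l) := by
      rw [mul_div_assoc', div_le_iff₀ h1l]
      have hul' : 0 ≤ u - (l:ℝ) := by linarith
      calc (N:ℝ) * (u - l) ≤ (ϑ * (1+l)) * (u - l) :=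
            mul_le_mul_of_nonneg_right hn hul'
        _ = ϑ * (u - l) * (1 + l) := by ring
    nlinarith
  calc (1+u)^N * Real.exp (-ϑ * u)
      ≤ ((1+(l:ℝ))^N * Real.exp ((N:ℝ) * ((u - l)/(1+l)))) * Real.exp (-ϑ * u) := by
        apply mul_le_mul_of_nonneg_right keyN (Real.exp_pos _).le
    _ = (1+(l:ℝ))^N * (Real.exp ((N:ℝ) * ((u - l)/(1+l))) * Real.exp (-ϑ * u)) := by ring
    _ ≤ (1+(l:ℝ))^N * Real.exp (-ϑ * l) := by
        apply mul_le_mul_of_nonneg_left hexple (by positivity)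

private lemma poly_upper (h : Polynomial ℝ) (p : ℕ) (hdeg : h.natDegree = p) :
    ∀ x : ℝ, 0 ≤ x →
      h.eval x ≤ (∑ i ∈ Finset.range (p+1), |h.coeff i|) * (1+x)^p := by
  intro x hx
  rw [Polynomial.eval_eq_sum_range, hdeg]
  rw [Finset.sum_mul]
  apply Finset.sum_le_sum
  intro i hi
  simp only [Finset.mem_range] at hi
  have hip : i ≤ p := by omega
  have h1 : h.coeff i * x^i ≤ |h.coeff i| * x^i :=
    mul_le_mul_of_nonneg_right (le_abs_self _) (by positivity)
  have h2 : x^i ≤ (1+x)^p := by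
    calc x^i ≤ (1+x)^i := pow_le_pow_left₀ hx (by linarith) i
      _ ≤ (1+x)^p := pow_le_pow_right₀ (by linarith) hip
  calc h.coeff i * x^i ≤ |h.coeff i| * x^i := h1
    _ ≤ |h.coeff i| * (1+x)^p := mul_le_mul_of_nonneg_left h2 (abs_nonneg _)

private lemma poly_lower (h : Polynomial ℝ) (p : ℕ) (hdeg : h.natDegree = p)
    (hpos : ∀ n : ℕ, 0 < n → 0 < h.eval (n : ℝ)) :
    ∃ ε : ℝ, 0 < ε ∧ ∃ x₀ : ℝ, ∀ x : ℝ, x₀ ≤ x → ε * x^p ≤ h.eval x := by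
  have hne : h ≠ 0 := by
    intro h0
    have := hpos 1 one_pos
    rw [h0] at this
    simp at this
  have hlc : 0 < h.leadingCoeff := by
    rcases lt_trichotomy h.leadingCoeff 0 with hneg | hzero | hposl
    · exfalso
      rcases Nat.eq_zero_or_pos p with hp0 | hp0
      · -- h is a nonzero constant
        have : h.natDegree = 0 := by rw [hdeg, hp0]
        have hC : h = Polynomial.C (h.coeff 0) := Polynomial.eq_C_of_natDegree_eq_zero this
        have h1 : h.eval 1 = h.coeff 0 := by rw [hC]; simp
        have h2 : h.leadingCoeff = h.coeff 0 := by
          rw [Polynomial.leadingCoeff, this]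
        have := hpos 1 one_pos
        rw [Nat.cast_one, h1] at this
        rw [h2] at hneg
        linarith
      · have hdeg' : 0 < h.degree := by
          apply Polynomial.natDegree_pos_iff_degree_pos.mp
          omega
        have hbot := Polynomial.tendsto_atBot_of_leadingCoeff_nonpos h hdeg' hneg.le
        have hev : ∀ᶠ x : ℝ in atTop, h.eval x < 0 := hbot.eventually (eventually_lt_atBot 0)
        obtain ⟨x₀, hx₀⟩ := eventually_atTop.mp hev
        have hn : (0:ℝ) < (⌈max x₀ 1⌉₊ : ℝ) := by
          have : (1:ℝ) ≤ (⌈max x₀ 1⌉₊ : ℝ) := by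
            exact_mod_cast Nat.one_le_ceil_iff.mpr
              (lt_of_lt_of_le zero_lt_one (le_max_right x₀ 1))
          linarith
        have hnn : 0 < ⌈max x₀ 1⌉₊ := by exact_mod_cast hn
        have h1 := hpos _ hnn
        have h2 := hx₀ (⌈max x₀ 1⌉₊ : ℝ) (le_trans (le_max_left _ _) (Nat.le_ceil _))
        linarith
    · exfalso
      exact hne (Polynomial.leadingCoeff_eq_zero.mp hzero)
    · exact hposl
  -- use the asymptotic equivalence
  have heq := Polynomial.isEquivalent_atTop_lead h
  have hlittle := heq.isLittleO
  have hev := hlittle.def (c := 1/2) (by norm_num)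
  rw [eventually_atTop] at hev
  obtain ⟨x₀, hx₀⟩ := hev
  refine ⟨h.leadingCoeff / 2, by linarith, max x₀ 0, fun x hx => ?_⟩
  have hx0 : (0:ℝ) ≤ x := le_trans (le_max_right _ _) hx
  have hb := hx₀ x (le_trans (le_max_left _ _) hx)
  rw [hdeg] at hb
  have habs : |h.eval x - h.leadingCoeff * x^p| ≤ 1/2 * (|h.leadingCoeff| * |x|^p) := by
    simpa [Real.norm_eq_abs, abs_mul, abs_pow] using hb
  have hxp : (0:ℝ) ≤ x^p := by positivity
  rw [abs_of_pos hlc, abs_of_nonneg hx0] at habs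
  have := abs_le.mp habs
  nlinarith

theorem conv_upper_bound_exponential_and_CLT_ratio
    (C : ℤ → ℝ) (hC : ∀ l, 0 ≤ C l) (hC0 : C 0 = 0)
    (h : Polynomial ℝ) (p : ℕ) (hdeg : h.natDegree = p)
    (hpos : ∀ n : ℕ, 0 < n → 0 < h.eval (n : ℝ))
    (ϑ c₁ c₂ : ℝ) (hϑ : 0 < ϑ) (hc₁ : 0 < c₁) (hc₁₂ : c₁ < c₂)
    (hlow : ∀ l : ℤ, l ≠ 0 → c₁ * h.eval |(l : ℝ)| * Real.exp (-ϑ * |(l : ℝ)|) ≤ C l)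
    (hupp : ∀ l : ℤ, l ≠ 0 → C l ≤ c₂ * h.eval |(l : ℝ)| * Real.exp (-ϑ * |(l : ℝ)|)) :
    (∃ c₂₂ : ℝ, 0 < c₂₂ ∧ ∃ L : ℤ, ∀ l : ℤ, L ≤ l →
      (∑' k : ℤ, C k * C (l - k)) ≤ c₂₂ * (l : ℝ) ^ (2 * p + 1) * Real.exp (-ϑ * (l : ℝ)))
    ∧ ∀ m q : ℕ, 2 ≤ m → 1 ≤ q → q ≤ m - 1 →
        (∃ K : ℝ, ∀ᶠ l : ℤ in atTop,
          (⨆ lam : ℤ, convPowZ C (m - q) lam * convPowZ C q (l - lam)) / convPowZ C m l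
            ≤ K / (l : ℝ))
        ∧ Tendsto
            (fun l : ℤ =>
              (⨆ lam : ℤ, convPowZ C (m - q) lam * convPowZ C q (l - lam)) / convPowZ C m l)
            atTop (nhds 0) := by
  have hc₂ : 0 < c₂ := lt_trans hc₁ hc₁₂
  -- global upper bound for C
  set H : ℝ := ∑ i ∈ Finset.range (p+1), |h.coeff i| with hHdef
  have hH0 : 0 ≤ H := Finset.sum_nonneg fun i _ => abs_nonneg _
  set A : ℝ := c₂ * H + 1 with hAdef
  have hA : 0 < A := by positivity
  have hCb : ∀ k : ℤ, C k ≤ A * (1+|(k:ℝ)|)^p * Real.exp (-ϑ * |(k:ℝ)|) := by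
    intro k
    rcases eq_or_ne k 0 with rfl | hk
    · rw [hC0]
      positivity
    · refine le_trans (hupp k hk) ?_
      have hup := poly_upper h p hdeg |(k:ℝ)| (abs_nonneg _)
      have he : (0:ℝ) < Real.exp (-ϑ * |(k:ℝ)|) := Real.exp_pos _
      have h1 : c₂ * h.eval |(k:ℝ)| ≤ c₂ * (H * (1+|(k:ℝ)|)^p) :=
        mul_le_mul_of_nonneg_left hup hc₂.le
      have h2 : c₂ * (H * (1+|(k:ℝ)|)^p) ≤ A * (1+|(k:ℝ)|)^p := by
        have : (0:ℝ) ≤ (1+|(k:ℝ)|)^p := by positivity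
        nlinarith
      calc c₂ * h.eval |(k:ℝ)| * Real.exp (-ϑ * |(k:ℝ)|)
          ≤ (A * (1+|(k:ℝ)|)^p) * Real.exp (-ϑ * |(k:ℝ)|) :=
            mul_le_mul_of_nonneg_right (le_trans h1 h2) he.le
        _ = _ := by ring
  -- global eventual lower bound for C
  obtain ⟨ε, hε, x₀, hx₀⟩ := poly_lower h p hdeg hpos
  set K : ℤ := max 1 ⌈x₀⌉ with hKdef
  have hK : 1 ≤ K := le_max_left _ _
  set α : ℝ := c₁ * ε with hαdef
  have hα : 0 < α := by positivity
  have hCl : ∀ k : ℤ, K ≤ k → α * (k:ℝ)^p * Real.exp (-ϑ * (k:ℝ)) ≤ C k := by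
    intro k hk
    have hk1 : 1 ≤ k := le_trans hK hk
    have hk0R : (0:ℝ) < (k:ℝ) := by exact_mod_cast (by omega : (0:ℤ) < k)
    have habs : |(k:ℝ)| = (k:ℝ) := abs_of_pos hk0R
    have hkx₀ : x₀ ≤ (k:ℝ) := by
      have h1 : (⌈x₀⌉ : ℤ) ≤ k := le_trans (le_max_right _ _) hk
      have h2 : ((⌈x₀⌉ : ℤ) : ℝ) ≤ (k:ℝ) := by exact_mod_cast h1
      exact le_trans (Int.le_ceil x₀) h2
    have hev := hx₀ (k:ℝ) hkx₀
    have hlow' := hlow k (by omega)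
    rw [habs] at hlow'
    refine le_trans ?_ hlow'
    apply mul_le_mul_of_nonneg_right _ (Real.exp_pos _).le
    rw [hαdef]
    calc c₁ * ε * (k:ℝ)^p = c₁ * (ε * (k:ℝ)^p) := by ring
      _ ≤ c₁ * h.eval (k:ℝ) := mul_le_mul_of_nonneg_left hev hc₁.le
  -- the master induction
  have key := key_all C hC hϑ hA hα hK p hCb hCl
  constructor
  · -- Part 1 : binary convolution bound
    have hconvCC := fun l => conv_upper_abs hϑ p p hA.le hA.le C C hC hC hCb hCb l
    have hTM := TM_nonneg (ϑ := ϑ) (N := p + p)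
    refine ⟨A * A * (1 + 2 * TM ϑ (p+p)) * 2^(2*p+1), by positivity, 1, fun l hl => ?_⟩
    have hl0 : (0:ℤ) < l := hl
    have hlR : (1:ℝ) ≤ (l:ℝ) := by exact_mod_cast hl
    have habs : |(l:ℝ)| = (l:ℝ) := abs_of_pos (by linarith)
    have hb := (hconvCC l).2
    rw [habs] at hb
    refine le_trans hb ?_
    have h2l : (1+(l:ℝ))^(p+p+1) ≤ 2^(2*p+1) * (l:ℝ)^(2*p+1) := by
      have h3 : 2*p+1 = p+p+1 := by omega
      rw [h3]
      have h2 := pow_le_pow_left₀ (by linarith : (0:ℝ) ≤ 1 + l)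
        (by linarith : 1+(l:ℝ) ≤ 2*l) (p+p+1)
      rwa [mul_pow] at h2
    calc A * A * (1 + 2 * TM ϑ (p+p)) * (1+(l:ℝ))^(p+p+1) * Real.exp (-ϑ * l)
        ≤ A * A * (1 + 2 * TM ϑ (p+p)) * (2^(2*p+1) * (l:ℝ)^(2*p+1)) * Real.exp (-ϑ * l) := by
          apply mul_le_mul_of_nonneg_right _ (Real.exp_pos _).le
          apply mul_le_mul_of_nonneg_left h2l (by positivity)
      _ = A * A * (1 + 2 * TM ϑ (p+p)) * 2^(2*p+1) * (l:ℝ)^(2*p+1) * Real.exp (-ϑ * l) := by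
          ring
  · -- Part 2 : the CLT ratio
    intro m q hm hq hqm
    have hr₁ : 1 ≤ m - q := by omega
    have hm1 : 1 ≤ m := by omega
    obtain ⟨B₁, β₁, L₁, hB₁, _, _, _, hub1, _⟩ := key (m - q) hr₁
    obtain ⟨B₂, β₂, L₂, hB₂, _, _, _, hub2, _⟩ := key q hq
    obtain ⟨Bm, βm, Lm, hBm, hβm, hLm, _, _, hlbm⟩ := key m hm1
    set s : ℕ := (m-q)*p + (m-q) - 1 with hsdef
    set t : ℕ := q*p + q - 1 with htdef
    set n : ℕ := s + t with hndef
    have hmexp : m*p + m - 1 = n + 1 := by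
      have hsum : (m - q) + q = m := by omega
      have hmul : (m-q)*p + q*p = m*p := by rw [← add_mul, hsum]
      rw [hndef, hsdef, htdef, ← hmul]
      have hq' := hq
      have hr₁' := hr₁
      generalize (m-q)*p = a at *
      generalize q*p = b at *
      omega
    set Kc : ℝ := B₁ * B₂ * 2^n / βm with hKcdef
    set L' : ℤ := max Lm (max 1 (⌈(n:ℝ)/ϑ⌉ + 1)) with hL'def
    have hmain : ∀ l : ℤ, L' ≤ l →
        (⨆ lam : ℤ, convPowZ C (m - q) lam * convPowZ C q (l - lam)) / convPowZ C m l
          ≤ Kc / (l : ℝ) := by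
      intro l hl
      have hlLm : Lm ≤ l := le_trans (le_max_left _ _) hl
      have hl1 : (1:ℤ) ≤ l := le_trans (le_trans (le_max_left _ _) (le_max_right _ _)) hl
      have hl0 : (0:ℤ) ≤ l := by omega
      have hlR : (1:ℝ) ≤ (l:ℝ) := by exact_mod_cast hl1
      have hl0R : (0:ℝ) < (l:ℝ) := by linarith
      have hceil : (⌈(n:ℝ)/ϑ⌉ : ℤ) ≤ l :=
        le_trans (by omega : (⌈(n:ℝ)/ϑ⌉ : ℤ) ≤ ⌈(n:ℝ)/ϑ⌉ + 1)
          (le_trans (le_trans (le_max_right _ _) (le_max_right _ _)) hl)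
      have hn : ((n : ℕ) : ℝ) ≤ ϑ * (1 + l) := by
        have h1 : ((n:ℝ)/ϑ) ≤ (l:ℝ) := by
          calc ((n:ℝ)/ϑ) ≤ (⌈(n:ℝ)/ϑ⌉ : ℝ) := Int.le_ceil _
            _ ≤ (l:ℝ) := by exact_mod_cast hceil
        have h2 : (n:ℝ) ≤ ϑ * l := by
          rw [div_le_iff₀ hϑ] at h1
          linarith [h1]
        nlinarith
      -- numerator bound
      have hnum : ∀ lam : ℤ, convPowZ C (m - q) lam * convPowZ C q (l - lam)
          ≤ B₁ * B₂ * ((1+(l:ℝ))^n * Real.exp (-ϑ * l)) := by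
        intro lam
        have h1 := hub1 lam
        have h2 := hub2 (l - lam)
        have hmul := mul_le_mul h1 h2 (convPowZ_nonneg C hC q _) (by positivity)
        refine le_trans hmul ?_
        have hpe := poly_exp_max hϑ s t l lam hl0 (by rw [← hndef]; exact hn)
        calc B₁ * (1+|(lam:ℝ)|)^s * Real.exp (-ϑ * |(lam:ℝ)|)
              * (B₂ * (1+|((l-lam : ℤ):ℝ)|)^t * Real.exp (-ϑ * |((l-lam : ℤ):ℝ)|))
            = B₁ * B₂ * ((1+|(lam:ℝ)|)^s * (1+|((l-lam : ℤ):ℝ)|)^t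
              * (Real.exp (-ϑ * |(lam:ℝ)|) * Real.exp (-ϑ * |((l-lam : ℤ):ℝ)|))) := by ring
          _ ≤ B₁ * B₂ * ((1+(l:ℝ))^(s+t) * Real.exp (-ϑ * l)) :=
              mul_le_mul_of_nonneg_left hpe (by positivity)
          _ = B₁ * B₂ * ((1+(l:ℝ))^n * Real.exp (-ϑ * l)) := by rw [hndef]
      have hsup : (⨆ lam : ℤ, convPowZ C (m - q) lam * convPowZ C q (l - lam))
          ≤ B₁ * B₂ * ((1+(l:ℝ))^n * Real.exp (-ϑ * l)) := ciSup_le hnum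
      -- denominator bound
      have hden : βm * (l:ℝ)^(n+1) * Real.exp (-ϑ * l) ≤ convPowZ C m l := by
        have := hlbm l hlLm
        rwa [hmexp] at this
      have hdenpos : (0:ℝ) < βm * (l:ℝ)^(n+1) * Real.exp (-ϑ * l) := by positivity
      have hratio : (⨆ lam : ℤ, convPowZ C (m - q) lam * convPowZ C q (l - lam))
            / convPowZ C m l
          ≤ (B₁ * B₂ * ((1+(l:ℝ))^n * Real.exp (-ϑ * l)))
            / (βm * (l:ℝ)^(n+1) * Real.exp (-ϑ * l)) :=
        div_le_div₀ (by positivity) hsup hdenpos hden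
      refine le_trans hratio ?_
      rw [div_le_div_iff₀ hdenpos hl0R]
      have h2l : (1+(l:ℝ))^n ≤ 2^n * (l:ℝ)^n := by
        have := pow_le_pow_left₀ (by linarith : (0:ℝ) ≤ 1 + l) (by linarith : 1+(l:ℝ) ≤ 2*l) n
        rwa [mul_pow] at this
      have hKcval : Kc * (βm * (l:ℝ)^(n+1) * Real.exp (-ϑ * l))
          = B₁ * B₂ * 2^n * ((l:ℝ)^(n+1) * Real.exp (-ϑ * l)) := by
        rw [hKcdef]
        field_simp
      rw [hKcval]
      calc B₁ * B₂ * ((1+(l:ℝ))^n * Real.exp (-ϑ * l)) * (l:ℝ)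
          ≤ B₁ * B₂ * ((2^n * (l:ℝ)^n) * Real.exp (-ϑ * l)) * (l:ℝ) := by
            apply mul_le_mul_of_nonneg_right _ hl0R.le
            apply mul_le_mul_of_nonneg_left _ (by positivity)
            exact mul_le_mul_of_nonneg_right h2l (Real.exp_pos _).le
        _ = B₁ * B₂ * 2^n * ((l:ℝ)^(n+1) * Real.exp (-ϑ * l)) := by
            rw [pow_succ]
            ring
    constructor
    · exact ⟨Kc, Filter.eventually_atTop.mpr ⟨L', hmain⟩⟩
    · have hnonneg : ∀ l : ℤ,
          0 ≤ (⨆ lam : ℤ, convPowZ C (m - q) lam * convPowZ C q (l - lam)) / convPowZ C m l :=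
        fun l => div_nonneg
          (Real.iSup_nonneg fun lam =>
            mul_nonneg (convPowZ_nonneg C hC _ _) (convPowZ_nonneg C hC _ _))
          (convPowZ_nonneg C hC _ _)
      have hlimK : Filter.Tendsto (fun l : ℤ => Kc / (l:ℝ)) Filter.atTop (nhds 0) :=
        Filter.Tendsto.div_atTop tendsto_const_nhds tendsto_intCast_atTop_atTop
      exact tendsto_of_tendsto_of_tendsto_of_le_of_le' tendsto_const_nhds hlimK
        (Filter.Eventually.of_forall hnonneg)
        (Filter.eventually_atTop.mpr ⟨L', hmain⟩)
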